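/- (Menger's theorem, node version.) Let G be a simple graph on a finite vertex type V and let u v : V be distinct, non-adjacent vertices. For every k : ℕ, the following are equivalent: (i) there exist k paths from u to v in G that are pairwise internally vertex-disjoint (no two of them share any vertex other than u and v); (ii) every set S of vertices with u ∉ S and v ∉ S such that u and v are not connected in the subgraph of G induced on the complement of S satisfies k ≤ |S|. In particular, the maximum number of pairwise internally disjoint u–v paths equals the minimum number of nodes whose removal disconnects u from v. -/

import Mathlib

set_option linter.unusedSectionVars false
set_option maxHeartbeats 1000000
open SimpleGraph

variable {V : Type} [Fintype V] [DecidableEq V] {G : SimpleGraph V}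

lemma end_not_mem_takeUntil {a b w : V} (p : G.Walk a b) (hp : p.IsPath)
    (h : w ∈ p.support) (hwb : w ≠ b) : b ∉ (p.takeUntil w h).support := by
  intro hb
  have hspec := p.take_spec h
  have hnd : p.support.Nodup := hp.support_nodup
  rw [← hspec, Walk.support_append] at hnd
  have hbd : b ∈ (p.dropUntil w h).support := Walk.end_mem_support _
  rw [Walk.support_eq_cons (p.dropUntil w h), List.mem_cons] at hbd
  rcases hbd with heq | hbd
  · exact hwb heq.symm
  · exact (List.disjoint_of_nodup_append hnd) hb hbd

lemma start_not_mem_dropUntil {a b w : V} (p : G.Walk a b) (hp : p.IsPath)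
    (h : w ∈ p.support) (hwa : w ≠ a) : a ∉ (p.dropUntil w h).support := by
  intro ha
  have hspec := p.take_spec h
  have hnd : p.support.Nodup := hp.support_nodup
  rw [← hspec, Walk.support_append] at hnd
  have hat : a ∈ (p.takeUntil w h).support := Walk.start_mem_support _
  rw [Walk.support_eq_cons (p.dropUntil w h), List.mem_cons] at ha
  rcases ha with heq | ha
  · exact hwa heq.symm
  · exact (List.disjoint_of_nodup_append hnd) hat ha

lemma exists_first {X : Set V} {a b : V} (p : G.Walk a b) (hp : p.IsPath)
    (hX : ∃ w ∈ p.support, w ∈ X) :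
    ∃ s ∈ X, ∃ q : G.Walk a s, q.IsPath ∧ (∀ w ∈ q.support, w ∈ p.support) ∧
      (∀ w ∈ q.support, w ∈ X → w = s) ∧ (b ∈ q.support → b = s) := by
  induction p with
  | nil =>
    obtain ⟨w, hw, hwX⟩ := hX
    simp only [Walk.support_nil, List.mem_singleton] at hw
    subst hw
    exact ⟨w, hwX, Walk.nil, by simp, by simp, by simp +contextual, by simp⟩
  | @cons a c b h q ih =>
    by_cases haX : a ∈ X
    · exact ⟨a, haX, Walk.nil, by simp, by simp, by simp +contextual, by
        simp only [Walk.support_nil, List.mem_singleton]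
        intro hb; exact hb.symm ▸ rfl⟩
    · have hq : q.IsPath := hp.of_cons
      have hX' : ∃ w ∈ q.support, w ∈ X := by
        obtain ⟨w, hw, hwX⟩ := hX
        rw [Walk.support_cons, List.mem_cons] at hw
        rcases hw with rfl | hw
        · exact absurd hwX haX
        · exact ⟨w, hw, hwX⟩
      obtain ⟨s, hsX, r, hrp, hrsub, hrX, hrb⟩ := ih hq hX'
      refine ⟨s, hsX, Walk.cons h r, ?_, ?_, ?_, ?_⟩
      · rw [Walk.cons_isPath_iff]
        refine ⟨hrp, fun ha => ?_⟩
        have := hrsub a ha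
        rw [Walk.cons_isPath_iff] at hp
        exact hp.2 this
      · intro w hw
        rw [Walk.support_cons, List.mem_cons] at hw
        rw [Walk.support_cons, List.mem_cons]
        rcases hw with rfl | hw
        · exact Or.inl rfl
        · exact Or.inr (hrsub w hw)
      · intro w hw hwX
        rw [Walk.support_cons, List.mem_cons] at hw
        rcases hw with rfl | hw
        · exact absurd hwX haX
        · exact hrX w hw hwX
      · intro hb
        rw [Walk.support_cons, List.mem_cons] at hb
        rcases hb with rfl | hb
        · exfalso
          rw [Walk.cons_isPath_iff] at hp
          exact hp.2 (Walk.end_mem_support q)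
        · exact hrb hb

lemma le_ncard_of_inj {k : ℕ} {S : Set V} (c : Fin k → V)
    (hinj : Function.Injective c) (hmem : ∀ i, c i ∈ S) : k ≤ S.ncard := by
  classical
  have h1 : (Finset.univ.image c).card = k := by
    rw [Finset.card_image_of_injective _ hinj, Finset.card_univ, Fintype.card_fin]
  have h2 : Finset.univ.image c ⊆ S.toFinset := by
    intro w hw
    obtain ⟨i, _, rfl⟩ := Finset.mem_image.mp hw
    exact Set.mem_toFinset.mpr (hmem i)
  calc k = (Finset.univ.image c).card := h1.symm
    _ ≤ S.toFinset.card := Finset.card_le_card h2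
    _ = S.ncard := (Set.ncard_eq_toFinset_card' S).symm

lemma exists_inj_of_le_ncard {k : ℕ} {S : Set V} (h : k ≤ S.ncard) :
    ∃ c : Fin k → V, Function.Injective c ∧ ∀ i, c i ∈ S := by
  classical
  rw [Set.ncard_eq_toFinset_card'] at h
  obtain ⟨t, ht, hcard⟩ := Finset.exists_subset_card_eq h
  have e : Fin k ≃ t := (Fintype.equivFinOfCardEq (by rw [Fintype.card_coe, hcard])).symm
  refine ⟨fun i => (e i : V), fun i j hij => e.injective (Subtype.ext hij), fun i => ?_⟩
  exact Set.mem_toFinset.mp (ht (e i).2)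

lemma mem_support_start_or_adj {a b w : V} (p : G.Walk a b) (hw : w ∈ p.support) :
    w = a ∨ ∃ z, G.Adj z w := by
  induction p with
  | nil => simp at hw; exact Or.inl hw
  | @cons a c b h q ih =>
    rw [Walk.support_cons, List.mem_cons] at hw
    rcases hw with rfl | hw
    · exact Or.inl rfl
    · rcases ih hw with rfl | hz
      · exact Or.inr ⟨a, h⟩
      · exact Or.inr hz

/-- `S` separates `A` from `B` in `G`: every walk from `A` to `B` meets `S`. -/
def ABSep (G : SimpleGraph V) (A B S : Set V) : Prop :=
  ∀ ⦃a b : V⦄, a ∈ A → b ∈ B → ∀ p : G.Walk a b, ∃ w ∈ p.support, w ∈ S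

theorem menger_AB_noEdge (G : SimpleGraph V) (hE : G.edgeSet = ∅) (A B : Set V) (k : ℕ)
    (hsep : ∀ S : Set V, ABSep G A B S → k ≤ S.ncard) :
    ∃ (f g : Fin k → V) (P : ∀ i, G.Walk (f i) (g i)),
      (∀ i, f i ∈ A) ∧ (∀ i, g i ∈ B) ∧ (∀ i, (P i).IsPath) ∧
      (∀ i j, i ≠ j → ∀ w, w ∈ (P i).support → w ∈ (P j).support → False) := by
  have hAB : ABSep G A B (A ∩ B) := by
    intro a b ha hb p
    cases p with
    | nil => exact ⟨a, Walk.start_mem_support _, ⟨ha, hb⟩⟩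
    | cons h q => exact absurd ((G.mem_edgeSet).mpr h) (by simp [hE])
  obtain ⟨c, hcinj, hcmem⟩ := exists_inj_of_le_ncard (hsep _ hAB)
  refine ⟨c, c, fun i => Walk.nil, fun i => (hcmem i).1, fun i => (hcmem i).2,
    fun i => by simp, fun i j hij w hwi hwj => ?_⟩
  simp only [Walk.support_nil, List.mem_singleton] at hwi hwj
  exact hij (hcinj (hwi ▸ hwj : c i = c j).symm ▸ rfl)

theorem menger_AB : ∀ (n : ℕ) (G : SimpleGraph V), G.edgeSet.ncard ≤ n →
    ∀ (A B : Set V) (k : ℕ),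
    (∀ S : Set V, ABSep G A B S → k ≤ S.ncard) →
    ∃ (f g : Fin k → V) (P : ∀ i, G.Walk (f i) (g i)),
      (∀ i, f i ∈ A) ∧ (∀ i, g i ∈ B) ∧ (∀ i, (P i).IsPath) ∧
      (∀ i j, i ≠ j → ∀ w, w ∈ (P i).support → w ∈ (P j).support → False) := by
  intro n
  induction n with
  | zero =>
    intro G hG A B k hsep
    have hE : G.edgeSet = ∅ := by
      rw [← Set.ncard_eq_zero (G.edgeSet.toFinite)]; omega
    exact menger_AB_noEdge G hE A B k hsep
  | succ n ih =>
    intro G hG A B k hsep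
    classical
    by_cases hE : G.edgeSet = ∅
    · exact menger_AB_noEdge G hE A B k hsep
    obtain ⟨e, he⟩ := Set.nonempty_iff_ne_empty.mpr hE
    revert he
    induction e using Sym2.ind with | _ x y => ?_
    intro he
    have hxy : G.Adj x y := (G.mem_edgeSet).mp he
    have hxyne : x ≠ y := hxy.ne
    set G' := G.deleteEdges {s(x, y)} with hG'def
    have hG'E : G'.edgeSet = G.edgeSet \ {s(x, y)} := G.edgeSet_deleteEdges _
    have hG'card : G'.edgeSet.ncard ≤ n := by
      rw [hG'E, Set.ncard_diff_singleton_of_mem he]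
      have : 0 < G.edgeSet.ncard := (Set.ncard_pos (G.edgeSet.toFinite)).mpr ⟨_, he⟩
      omega
    have hG'le : G' ≤ G := G.deleteEdges_le _
    -- transferring walks from G' to G
    have htransG : ∀ {a b : V} (p : G'.Walk a b), ∀ f ∈ p.edges, f ∈ G.edgeSet :=
      fun p f hf => (SimpleGraph.edgeSet_mono hG'le) (p.edges_subset_edgeSet hf)
    by_cases hcase : ∀ S : Set V, ABSep G' A B S → k ≤ S.ncard
    · -- deleting e does not hurt: use IH directly
      obtain ⟨f, g, P, hfA, hgB, hP, hdisj⟩ := ih G' hG'card A B k hcase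
      refine ⟨f, g, fun i => (P i).transfer G (htransG (P i)), hfA, hgB,
        fun i => ((hP i).transfer _), fun i j hij w hwi hwj => ?_⟩
      rw [Walk.support_transfer] at hwi hwj
      exact hdisj i j hij w hwi hwj
    · push_neg at hcase
      obtain ⟨S₀, hS₀, hS₀k⟩ := hcase
      -- S₀ ∪ {x} and S₀ ∪ {y} separate A from B in G
      have hsepx : ABSep G A B (insert x S₀) := by
        intro a b ha hb p
        by_cases hx : x ∈ p.support
        · exact ⟨x, hx, Set.mem_insert _ _⟩
        · have hpe : ∀ f ∈ p.edges, f ∈ G'.edgeSet := by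
            intro f hf
            rw [hG'E]
            refine ⟨p.edges_subset_edgeSet hf, ?_⟩
            intro hfe
            rw [Set.mem_singleton_iff] at hfe
            subst hfe
            exact hx (p.fst_mem_support_of_mem_edges hf)
          obtain ⟨w, hw, hwS⟩ := hS₀ ha hb (p.transfer G' hpe)
          rw [Walk.support_transfer] at hw
          exact ⟨w, hw, Set.mem_insert_of_mem _ hwS⟩
      have hsepy : ABSep G A B (insert y S₀) := by
        intro a b ha hb p
        by_cases hy : y ∈ p.support
        · exact ⟨y, hy, Set.mem_insert _ _⟩
        · have hpe : ∀ f ∈ p.edges, f ∈ G'.edgeSet := by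
            intro f hf
            rw [hG'E]
            refine ⟨p.edges_subset_edgeSet hf, ?_⟩
            intro hfe
            rw [Set.mem_singleton_iff] at hfe
            subst hfe
            exact hy (p.snd_mem_support_of_mem_edges hf)
          obtain ⟨w, hw, hwS⟩ := hS₀ ha hb (p.transfer G' hpe)
          rw [Walk.support_transfer] at hw
          exact ⟨w, hw, Set.mem_insert_of_mem _ hwS⟩
      have hxS : x ∉ S₀ := by
        intro hx
        rw [Set.insert_eq_self.mpr hx] at hsepx
        exact absurd (hsep _ hsepx) (by omega)
      have hyS : y ∉ S₀ := by
        intro hy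
        rw [Set.insert_eq_self.mpr hy] at hsepy
        exact absurd (hsep _ hsepy) (by omega)
      have hkS₀ : S₀.ncard + 1 = k := by
        have h1 : k ≤ (insert x S₀).ncard := hsep _ hsepx
        have h2 : (insert x S₀).ncard ≤ S₀.ncard + 1 := Set.ncard_insert_le _ _
        omega
      set B' : Set V := insert x (insert y S₀) with hB'def
      have hS₀B' : S₀ ⊆ B' := fun z hz => Set.mem_insert_of_mem _ (Set.mem_insert_of_mem _ hz)
      have hxB' : x ∈ B' := Set.mem_insert _ _
      have hyB' : y ∈ B' := Set.mem_insert_of_mem _ (Set.mem_insert _ _)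
      have hmemB' : ∀ z ∈ B', z = x ∨ z = y ∨ z ∈ S₀ := by
        intro z hz
        rcases hz with rfl | hz
        · exact Or.inl rfl
        · rcases hz with rfl | hz
          · exact Or.inr (Or.inl rfl)
          · exact Or.inr (Or.inr hz)
      -- the two separator conditions for the IH
      have hsep₁ : ∀ T : Set V, ABSep G' A B' T → k ≤ T.ncard := by
        intro T hT
        apply hsep
        intro a b ha hb W
        have htp : (W.toPath : G.Walk a b).IsPath := W.toPath.2
        have htpB' : ∃ w ∈ (W.toPath : G.Walk a b).support, w ∈ B' := by
          obtain ⟨w, hw, hwS⟩ := hsepx ha hb (W.toPath : G.Walk a b)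
          exact ⟨w, hw, by rcases hwS with rfl | h; exact hxB'; exact hS₀B' h⟩
        obtain ⟨s', hs'B', Q, hQp, hQsub, hQX, -⟩ := exists_first _ htp htpB'
        have hQe : ∀ f ∈ Q.edges, f ∈ G'.edgeSet := by
          intro f hf
          rw [hG'E]
          refine ⟨Q.edges_subset_edgeSet hf, ?_⟩
          intro hfe
          rw [Set.mem_singleton_iff] at hfe
          subst hfe
          have hx' : x ∈ Q.support := Q.fst_mem_support_of_mem_edges hf
          have hy' : y ∈ Q.support := Q.snd_mem_support_of_mem_edges hf
          exact hxyne ((hQX x hx' hxB').trans (hQX y hy' hyB').symm)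
        obtain ⟨z, hz, hzT⟩ := hT ha hs'B' (Q.transfer G' hQe)
        rw [Walk.support_transfer] at hz
        exact ⟨z, W.support_toPath_subset (hQsub z hz), hzT⟩
      have hsep₂ : ∀ T : Set V, ABSep G' B' B T → k ≤ T.ncard := by
        intro T hT
        apply hsep
        intro a b ha hb W
        have htp : ((W.toPath : G.Walk a b).reverse).IsPath := W.toPath.2.reverse
        have htpB' : ∃ w ∈ (W.toPath : G.Walk a b).reverse.support, w ∈ B' := by
          obtain ⟨w, hw, hwS⟩ := hsepx ha hb (W.toPath : G.Walk a b)
          rw [Walk.support_reverse]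
          refine ⟨w, List.mem_reverse.mpr hw, ?_⟩
          rcases hwS with rfl | h; exact hxB'; exact hS₀B' h
        obtain ⟨s', hs'B', Q, hQp, hQsub, hQX, -⟩ := exists_first _ htp htpB'
        have hQe : ∀ f ∈ Q.reverse.edges, f ∈ G'.edgeSet := by
          intro f hf
          rw [Walk.edges_reverse, List.mem_reverse] at hf
          rw [hG'E]
          refine ⟨Q.edges_subset_edgeSet hf, ?_⟩
          intro hfe
          rw [Set.mem_singleton_iff] at hfe
          subst hfe
          have hx' : x ∈ Q.support := Q.fst_mem_support_of_mem_edges hf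
          have hy' : y ∈ Q.support := Q.snd_mem_support_of_mem_edges hf
          exact hxyne ((hQX x hx' hxB').trans (hQX y hy' hyB').symm)
        obtain ⟨z, hz, hzT⟩ := hT hs'B' hb (Q.reverse.transfer G' hQe)
        rw [Walk.support_transfer, Walk.support_reverse, List.mem_reverse] at hz
        have : z ∈ (W.toPath : G.Walk a b).support := by
          have := hQsub z hz
          rw [Walk.support_reverse, List.mem_reverse] at this
          exact this
        exact ⟨z, W.support_toPath_subset this, hzT⟩
      -- apply the induction hypothesis twice
      obtain ⟨a₁, b₁, D₁, ha₁, hb₁, hD₁p, hD₁d⟩ := ih G' hG'card A B' k hsep₁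
      obtain ⟨a₂, b₂, D₂, ha₂, hb₂, hD₂p, hD₂d⟩ := ih G' hG'card B' B k hsep₂
      -- truncate the first family at the first B'-vertex
      have trunc₁ : ∀ i, ∃ (s : V), s ∈ B' ∧ ∃ q : G'.Walk (a₁ i) s, q.IsPath ∧
          (∀ w ∈ q.support, w ∈ (D₁ i).support) ∧ (∀ w ∈ q.support, w ∈ B' → w = s) := by
        intro i
        obtain ⟨s, hs, q, hq1, hq2, hq3, -⟩ := exists_first (D₁ i) (hD₁p i)
          ⟨b₁ i, Walk.end_mem_support _, hb₁ i⟩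
        exact ⟨s, hs, q, hq1, hq2, hq3⟩
      choose s hsB' P₁ hP₁p hP₁sub hP₁X using trunc₁
      -- truncate the second family at the last B'-vertex
      have trunc₂ : ∀ j, ∃ (t : V), t ∈ B' ∧ ∃ r : G'.Walk t (b₂ j), r.IsPath ∧
          (∀ w ∈ r.support, w ∈ (D₂ j).support) ∧ (∀ w ∈ r.support, w ∈ B' → w = t) := by
        intro j
        obtain ⟨t, ht, q, hq1, hq2, hq3, -⟩ := exists_first (D₂ j).reverse ((hD₂p j).reverse)
          ⟨a₂ j, by rw [Walk.support_reverse, List.mem_reverse]; exact Walk.start_mem_support _,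
            ha₂ j⟩
        refine ⟨t, ht, q.reverse, hq1.reverse, ?_, ?_⟩
        · intro w hw
          rw [Walk.support_reverse, List.mem_reverse] at hw
          have := hq2 w hw
          rw [Walk.support_reverse, List.mem_reverse] at this
          exact this
        · intro w hw
          rw [Walk.support_reverse, List.mem_reverse] at hw
          exact hq3 w hw
      choose t htB' P₂ hP₂p hP₂sub hP₂X using trunc₂
      -- injectivity of endpoints
      have sinj : Function.Injective s := by
        intro i j hij
        by_contra hne
        have h2 : s i ∈ (P₁ j).support := by rw [hij]; exact Walk.end_mem_support _
        exact hD₁d i j hne (s i) (hP₁sub i _ (Walk.end_mem_support _)) (hP₁sub j _ h2)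
      have tinj : Function.Injective t := by
        intro i j hij
        by_contra hne
        have h2 : t i ∈ (P₂ j).support := by rw [hij]; exact Walk.start_mem_support _
        exact hD₂d i j hne (t i) (hP₂sub i _ (Walk.start_mem_support _)) (hP₂sub j _ h2)
      -- claim 1 : common endpoints lie in S₀
      have claim1 : ∀ i j, s i = t j → s i ∈ S₀ := by
        intro i j hij
        by_contra hc
        obtain ⟨z, hz, hzS⟩ := hS₀ (ha₁ i) (hb₂ j) ((P₁ i).append ((P₂ j).copy hij.symm rfl))
        rw [Walk.mem_support_append_iff] at hz
        rcases hz with hz | hz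
        · have hzs : z = s i := hP₁X i z hz (hS₀B' hzS)
          rw [hzs] at hzS
          exact hc hzS
        · rw [Walk.support_copy] at hz
          have hzt : z = t j := hP₂X j z hz (hS₀B' hzS)
          rw [hzt, ← hij] at hzS
          exact hc hzS
      -- L3 : a common vertex of P₁ i and P₂ j must be both endpoints
      have L3 : ∀ i j w, w ∈ (P₁ i).support → w ∈ (P₂ j).support → w = s i ∧ w = t j := by
        intro i j w hwi hwj
        by_cases hw : w ∈ B'
        · exact ⟨hP₁X i w hwi hw, hP₂X j w hwj hw⟩
        exfalso
        have hws : w ≠ s i := fun h => hw (h ▸ hsB' i)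
        have hwt : w ≠ t j := fun h => hw (h ▸ htB' j)
        obtain ⟨z, hz, hzS⟩ := hS₀ (ha₁ i) (hb₂ j)
          (((P₁ i).takeUntil w hwi).append ((P₂ j).dropUntil w hwj))
        rw [Walk.mem_support_append_iff] at hz
        rcases hz with hz | hz
        · have hzB : z = s i :=
            hP₁X i z (Walk.support_takeUntil_subset _ hwi hz) (hS₀B' hzS)
          exact end_not_mem_takeUntil (P₁ i) (hP₁p i) hwi hws (hzB ▸ hz)
        · have hzB : z = t j :=
            hP₂X j z (Walk.support_dropUntil_subset _ hwj hz) (hS₀B' hzS)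
          exact start_not_mem_dropUntil (P₂ j) (hP₂p j) hwj hwt (hzB ▸ hz)
      -- there is exactly one fan path of each family not ending in S₀
      have hmemxy₁ : ∀ i, s i ∉ S₀ → s i = x ∨ s i = y := by
        intro i hi
        rcases hmemB' _ (hsB' i) with h | h | h
        · exact Or.inl h
        · exact Or.inr h
        · exact absurd h hi
      have hmemxy₂ : ∀ j, t j ∉ S₀ → t j = x ∨ t j = y := by
        intro j hj
        rcases hmemB' _ (htB' j) with h | h | h
        · exact Or.inl h
        · exact Or.inr h
        · exact absurd h hj
      have hex₁ : ∃ i₀, s i₀ ∉ S₀ := by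
        by_contra hall
        push_neg at hall
        exact absurd (le_ncard_of_inj s sinj hall) (by omega)
      have hex₂ : ∃ j₀, t j₀ ∉ S₀ := by
        by_contra hall
        push_neg at hall
        exact absurd (le_ncard_of_inj t tinj hall) (by omega)
      obtain ⟨i₀, hi₀⟩ := hex₁
      obtain ⟨j₀, hj₀⟩ := hex₂
      have huniq₁ : ∀ i, i ≠ i₀ → s i ∈ S₀ := by
        intro i₁ hne
        by_contra hi₁
        -- s i₀ and s i₁ are x and y in some order, so every t j is in S₀
        have hall : ∀ j, t j ∈ S₀ := by
          intro j
          rcases hmemB' _ (htB' j) with h | h | h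
          · -- t j = x : x = s i₀ or s i₁
            exfalso
            rcases hmemxy₁ i₀ hi₀ with h0 | h0
            · exact hxS (h0 ▸ claim1 i₀ j (by rw [h0, h]))
            · rcases hmemxy₁ i₁ hi₁ with h1 | h1
              · exact hxS (h1 ▸ claim1 i₁ j (by rw [h1, h]))
              · exact hne (sinj (h0.trans h1.symm)).symm
          · exfalso
            rcases hmemxy₁ i₀ hi₀ with h0 | h0
            · rcases hmemxy₁ i₁ hi₁ with h1 | h1
              · exact hne (sinj (h0.trans h1.symm)).symm
              · exact hyS (h1 ▸ claim1 i₁ j (by rw [h1, h]))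
            · exact hyS (h0 ▸ claim1 i₀ j (by rw [h0, h]))
          · exact h
        exact absurd (le_ncard_of_inj t tinj hall) (by omega)
      have huniq₂ : ∀ j, j ≠ j₀ → t j ∈ S₀ := by
        intro j₁ hne
        by_contra hj₁
        have hall : ∀ i, s i ∈ S₀ := by
          intro i
          rcases hmemB' _ (hsB' i) with h | h | h
          · exfalso
            rcases hmemxy₂ j₀ hj₀ with h0 | h0
            · exact hxS (h ▸ claim1 i j₀ (by rw [h0, h]))
            · rcases hmemxy₂ j₁ hj₁ with h1 | h1
              · exact hxS (h ▸ claim1 i j₁ (by rw [h1, h]))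
              · exact hne (tinj (h0.trans h1.symm)).symm
          · exfalso
            rcases hmemxy₂ j₀ hj₀ with h0 | h0
            · rcases hmemxy₂ j₁ hj₁ with h1 | h1
              · exact hne (tinj (h0.trans h1.symm)).symm
              · exact hyS (h ▸ claim1 i j₁ (by rw [h1, h]))
            · exact hyS (h ▸ claim1 i j₀ (by rw [h0, h]))
          · exact h
        exact absurd (le_ncard_of_inj s sinj hall) (by omega)
      -- the two exceptional endpoints are adjacent in G
      have hαβne : s i₀ ≠ t j₀ := fun h => hi₀ (claim1 i₀ j₀ h)
      have hadjαβ : G.Adj (s i₀) (t j₀) := by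
        rcases hmemxy₁ i₀ hi₀ with h0 | h0 <;> rcases hmemxy₂ j₀ hj₀ with h1 | h1
        · exact absurd (h0.trans h1.symm) hαβne
        · rw [h0, h1]; exact hxy
        · rw [h0, h1]; exact hxy.symm
        · exact absurd (h0.trans h1.symm) hαβne
      -- pairing of the remaining endpoints
      have hpair : ∀ i, i ≠ i₀ → ∃ j, j ≠ j₀ ∧ t j = s i := by
        intro i hne
        have hsub : (Finset.univ.erase j₀).image t ⊆ S₀.toFinset := by
          intro z hz
          obtain ⟨j, hj, rfl⟩ := Finset.mem_image.mp hz
          exact Set.mem_toFinset.mpr (huniq₂ j (Finset.mem_erase.mp hj).1)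
        have hcard : ((Finset.univ.erase j₀).image t).card = S₀.toFinset.card := by
          rw [Finset.card_image_of_injective _ tinj, Finset.card_erase_of_mem
            (Finset.mem_univ _), Finset.card_univ, Fintype.card_fin]
          rw [← Set.ncard_eq_toFinset_card']
          omega
        have heq := Finset.eq_of_subset_of_card_le hsub (le_of_eq hcard.symm)
        have hmem : s i ∈ (Finset.univ.erase j₀).image t := by
          rw [heq]
          exact Set.mem_toFinset.mpr (huniq₁ i hne)
        obtain ⟨j, hj, hjt⟩ := Finset.mem_image.mp hmem
        exact ⟨j, (Finset.mem_erase.mp hj).1, hjt⟩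
      choose jf hjfne hjft using hpair
      set σ : Fin k → Fin k := fun i => if h : i = i₀ then j₀ else jf i h with hσdef
      have hσi₀ : σ i₀ = j₀ := by simp [hσdef]
      have hσne : ∀ i (h : i ≠ i₀), σ i = jf i h := fun i h => by simp [hσdef, h]
      have hσt : ∀ i (h : i ≠ i₀), t (σ i) = s i := by
        intro i h; rw [hσne i h]; exact hjft i h
      have hσinj : Function.Injective σ := by
        intro i i' h
        by_cases h1 : i = i₀ <;> by_cases h2 : i' = i₀
        · rw [h1, h2]
        · exfalso
          rw [h1, hσi₀, hσne i' h2] at h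
          exact hjfne i' h2 h.symm
        · exfalso
          rw [h2, hσi₀, hσne i h1] at h
          exact hjfne i h1 h
        · rw [hσne i h1, hσne i' h2] at h
          have := (hjft i h1).symm.trans ((congrArg t h).trans (hjft i' h2))
          exact sinj this
      -- build the final family of paths
      have final : ∀ i, ∃ W : G.Walk (a₁ i) (b₂ (σ i)), W.IsPath ∧
          (∀ w ∈ W.support, w ∈ (P₁ i).support ∨ w ∈ (P₂ (σ i)).support) := by
        intro i
        by_cases h : i = i₀
        · have hσ : σ i = j₀ := by rw [h, hσi₀]
          have hadj' : G.Adj (s i) (t j₀) := by rw [h]; exact hadjαβ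
          have hne' : s i ≠ t j₀ := by rw [h]; exact hαβne
          rw [hσ]
          refine ⟨((P₁ i).transfer G (htransG _)).append
            (Walk.cons hadj' ((P₂ j₀).transfer G (htransG _))), ?_, ?_⟩
          · rw [Walk.isPath_def, Walk.support_append, Walk.support_cons, List.tail_cons,
              Walk.support_transfer, Walk.support_transfer]
            rw [List.nodup_append]
            refine ⟨(hP₁p i).support_nodup, (hP₂p j₀).support_nodup, ?_⟩
            intro w hw1 w' hw2 hww'
            subst hww'
            obtain ⟨hws, hwt⟩ := L3 i j₀ w hw1 hw2
            exact hne' (hws.symm.trans hwt)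
          · intro w hw
            rw [Walk.mem_support_append_iff] at hw
            rcases hw with hw | hw
            · rw [Walk.support_transfer] at hw
              exact Or.inl hw
            · rw [Walk.support_cons, List.mem_cons] at hw
              rcases hw with rfl | hw
              · exact Or.inl (Walk.end_mem_support _)
              · rw [Walk.support_transfer] at hw
                exact Or.inr hw
        · refine ⟨((P₁ i).transfer G (htransG _)).append
            (((P₂ (σ i)).transfer G (htransG _)).copy (hσt i h) rfl), ?_, ?_⟩
          · rw [Walk.isPath_def, Walk.support_append, Walk.support_copy,
              Walk.support_transfer, Walk.support_transfer]
            rw [Walk.support_eq_cons (P₂ (σ i)), List.tail_cons]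
            have hnd2 := (hP₂p (σ i)).support_nodup
            rw [Walk.support_eq_cons (P₂ (σ i)), List.nodup_cons] at hnd2
            rw [List.nodup_append]
            refine ⟨(hP₁p i).support_nodup, hnd2.2, ?_⟩
            intro w hw1 w' hw2 hww'
            subst hww'
            have hw2' : w ∈ (P₂ (σ i)).support := by
              rw [Walk.support_eq_cons (P₂ (σ i))]
              exact List.mem_cons_of_mem _ hw2
            obtain ⟨hws, hwt⟩ := L3 i (σ i) w hw1 hw2'
            rw [hwt] at hw2
            exact hnd2.1 hw2
          · intro w hw
            rw [Walk.mem_support_append_iff] at hw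
            rcases hw with hw | hw
            · rw [Walk.support_transfer] at hw
              exact Or.inl hw
            · rw [Walk.support_copy, Walk.support_transfer] at hw
              exact Or.inr hw
      choose W hWp hWsub using final
      refine ⟨a₁, fun i => b₂ (σ i), W, ha₁, fun i => hb₂ (σ i), hWp, ?_⟩
      intro i i' hne w hwi hwi'
      rcases hWsub i w hwi with hw1 | hw1 <;> rcases hWsub i' w hwi' with hw2 | hw2
      · exact hD₁d i i' hne w (hP₁sub i w hw1) (hP₁sub i' w hw2)
      · -- w ∈ P₁ i and w ∈ P₂ (σ i')
        obtain ⟨hws, hwt⟩ := L3 i (σ i') w hw1 hw2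
        by_cases h : i' = i₀
        · subst h
          rw [hσi₀] at hwt
          have : s i = t j₀ := hws.symm.trans hwt
          exact hj₀ (this ▸ claim1 i j₀ this)
        · have := (hws.symm.trans hwt).trans (hσt i' h)
          exact hne (sinj this)
      · obtain ⟨hws, hwt⟩ := L3 i' (σ i) w hw2 hw1
        by_cases h : i = i₀
        · subst h
          rw [hσi₀] at hwt
          have : s i' = t j₀ := hws.symm.trans hwt
          exact hj₀ (this ▸ claim1 i' j₀ this)
        · have := (hws.symm.trans hwt).trans (hσt i h)
          exact hne (sinj this).symm
      · exact hD₂d (σ i) (σ i') (fun h => hne (hσinj h)) w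
          (hP₂sub (σ i) w hw1) (hP₂sub (σ i') w hw2)

lemma reach_of_walk {S : Set V} {a b : V} (p : G.Walk a b)
    (hp : ∀ w ∈ p.support, w ∈ Sᶜ) (ha : a ∈ Sᶜ) (hb : b ∈ Sᶜ) :
    (G.induce Sᶜ).Reachable ⟨a, ha⟩ ⟨b, hb⟩ := by
  induction p with
  | nil => rfl
  | @cons a c b h q ih =>
    have hc : c ∈ Sᶜ := by
      apply hp c
      rw [Walk.support_cons]
      exact List.mem_cons_of_mem _ (Walk.start_mem_support q)
    have hq : ∀ w ∈ q.support, w ∈ Sᶜ := by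
      intro w hw
      apply hp w
      rw [Walk.support_cons]
      exact List.mem_cons_of_mem _ hw
    have hadj : (G.induce Sᶜ).Adj ⟨a, ha⟩ ⟨c, hc⟩ := h
    exact hadj.reachable.trans (ih hq hc hb)

lemma walk_of_reach {S : Set V} {a b : V} (ha : a ∈ Sᶜ) (hb : b ∈ Sᶜ)
    (hr : (G.induce Sᶜ).Reachable ⟨a, ha⟩ ⟨b, hb⟩) :
    ∃ p : G.Walk a b, ∀ w ∈ p.support, w ∉ S := by
  obtain ⟨q⟩ := hr
  let φ : G.induce Sᶜ →g G := ⟨Subtype.val, fun h => h⟩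
  refine ⟨q.map φ, fun w hw => ?_⟩
  rw [Walk.support_map, List.mem_map] at hw
  obtain ⟨z, hz, rfl⟩ := hw
  exact z.2

/-- Menger's theorem, node version: there exist `k` pairwise internally
vertex-disjoint `u`–`v` paths iff every set of (internal) vertices whose removal
disconnects `u` from `v` has at least `k` elements. -/
theorem menger_node_version
    (V : Type) [Fintype V] [DecidableEq V] (G : SimpleGraph V)
    (u v : V) (huv : u ≠ v) (hadj : ¬ G.Adj u v) (k : ℕ) :
    (∃ P : Fin k → G.Walk u v,
      (∀ i : Fin k, (P i).IsPath) ∧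
      (∀ i j : Fin k, i ≠ j → ∀ w : V,
        w ∈ (P i).support → w ∈ (P j).support → w = u ∨ w = v)) ↔
    (∀ (S : Set V) (hu : u ∉ S) (hv : v ∉ S),
      ¬ (G.induce Sᶜ).Reachable ⟨u, hu⟩ ⟨v, hv⟩ → k ≤ S.ncard) := by
  classical
  constructor
  · rintro ⟨P, hPp, hPd⟩ S hu hv hnr
    have hws : ∀ p : G.Walk u v, ∃ w ∈ p.support, w ∈ S := by
      intro p
      by_contra hno
      push_neg at hno
      exact hnr (reach_of_walk p (fun w hw => hno w hw) hu hv)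
    choose c hcmem hcS using fun i => hws (P i)
    refine le_ncard_of_inj c ?_ hcS
    intro i j hij
    by_contra hne
    rcases hPd i j hne (c i) (hcmem i) (hij ▸ hcmem j) with h | h
    · exact hu (h ▸ hcS i)
    · exact hv (h ▸ hcS i)
  · intro hRHS
    -- walk-based separation bound
    have hsepW : ∀ S : Set V, u ∉ S → v ∉ S →
        (∀ p : G.Walk u v, ∃ w ∈ p.support, w ∈ S) → k ≤ S.ncard := by
      intro S hu hv hws
      refine hRHS S hu hv ?_
      intro hr
      obtain ⟨p, hp⟩ := walk_of_reach hu hv hr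
      obtain ⟨w, hw, hwS⟩ := hws p
      exact hp w hw hwS
    -- the graph with u and v deleted
    let G₀ : SimpleGraph V :=
      { Adj := fun a b => G.Adj a b ∧ a ≠ u ∧ a ≠ v ∧ b ≠ u ∧ b ≠ v
        symm := by
          constructor
          intro a b h
          exact ⟨h.1.symm, h.2.2.2.1, h.2.2.2.2, h.2.1, h.2.2.1⟩
        loopless := ⟨fun a h => G.loopless.irrefl a h.1⟩ }
    have hG₀le : ∀ {a b : V}, G₀.Adj a b → G.Adj a b := fun h => h.1
    set A : Set V := G.neighborSet u with hA
    set B : Set V := G.neighborSet v with hB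
    -- vertices on G₀-walks from A to B avoid u and v
    have hnotuv : ∀ {a b : V}, a ∈ A → (p : G₀.Walk a b) →
        ∀ w ∈ p.support, w ≠ u ∧ w ≠ v := by
      intro a b ha p w hw
      rcases mem_support_start_or_adj p hw with rfl | ⟨z, hz⟩
      · constructor
        · intro h; rw [h] at ha; exact G.loopless.irrefl u ha
        · intro h; rw [h] at ha; exact hadj ha
      · exact ⟨hz.2.2.2.1, hz.2.2.2.2⟩
    -- extract the middle part of a u-v walk
    have hmiddle : ∀ p : G.Walk u v, ∃ (c d : V) (hc : c ∈ A) (hd : d ∈ B)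
        (m : G₀.Walk c d), ∀ w ∈ m.support, w ∈ p.support := by
      intro p
      set tp : G.Walk u v := (p.toPath : G.Walk u v) with htp
      have htpp : tp.IsPath := p.toPath.2
      obtain ⟨c, hc, q, hq⟩ := Walk.exists_eq_cons_of_ne huv tp
      have hcv : c ≠ v := by
        rintro rfl
        exact hadj hc
      have hqp : q.IsPath := by
        rw [hq, Walk.cons_isPath_iff] at htpp
        exact htpp.1
      have huq : u ∉ q.support := by
        rw [hq, Walk.cons_isPath_iff] at htpp
        exact htpp.2
      obtain ⟨d, hd, r, hr⟩ := Walk.exists_eq_cons_of_ne (Ne.symm hcv) q.reverse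
      have hrp : r.IsPath := by
        have : q.reverse.IsPath := hqp.reverse
        rw [hr, Walk.cons_isPath_iff] at this
        exact this.1
      have hvr : v ∉ r.support := by
        have : q.reverse.IsPath := hqp.reverse
        rw [hr, Walk.cons_isPath_iff] at this
        exact this.2
      -- m := r.reverse : Walk c d in G, avoiding u and v
      have hrsubq : ∀ w ∈ r.support, w ∈ q.support := by
        intro w hw
        have : w ∈ q.reverse.support := by
          rw [hr, Walk.support_cons]
          exact List.mem_cons_of_mem _ hw
        rw [Walk.support_reverse, List.mem_reverse] at this
        exact this
      have hur : u ∉ r.support := fun h => huq (hrsubq u h)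
      have hme : ∀ f ∈ r.reverse.edges, f ∈ G₀.edgeSet := by
        intro f hf
        induction f using Sym2.ind with | _ a b => ?_
        have hab : G.Adj a b := r.reverse.adj_of_mem_edges hf
        have ha' : a ∈ r.reverse.support := r.reverse.fst_mem_support_of_mem_edges hf
        have hb' : b ∈ r.reverse.support := r.reverse.snd_mem_support_of_mem_edges hf
        rw [Walk.support_reverse, List.mem_reverse] at ha' hb'
        rw [mem_edgeSet]
        refine ⟨hab, ?_, ?_, ?_, ?_⟩
        · rintro rfl; exact hur ha'
        · rintro rfl; exact hvr ha'
        · rintro rfl; exact hur hb'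
        · rintro rfl; exact hvr hb'
      refine ⟨c, d, hc, hd, r.reverse.transfer G₀ hme, ?_⟩
      intro w hw
      rw [Walk.support_transfer, Walk.support_reverse, List.mem_reverse] at hw
      have hwq := hrsubq w hw
      apply p.support_toPath_subset
      rw [← htp, hq, Walk.support_cons]
      exact List.mem_cons_of_mem _ hwq
    -- the A-B separation bound in G₀
    have hsepAB : ∀ S : Set V, ABSep G₀ A B S → k ≤ S.ncard := by
      intro S hS
      have hS' : ∀ p : G.Walk u v, ∃ w ∈ p.support, w ∈ S \ {u, v} := by
        intro p
        obtain ⟨c, d, hc, hd, m, hmsub⟩ := hmiddle p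
        obtain ⟨w, hw, hwS⟩ := hS hc hd m
        have := hnotuv hc m w hw
        exact ⟨w, hmsub w hw, hwS, by simp [this.1, this.2]⟩
      have h1 : k ≤ (S \ {u, v}).ncard := by
        refine hsepW _ (by simp) (by simp [huv]) hS'
      exact h1.trans (Set.ncard_le_ncard Set.diff_subset (S.toFinite))
    -- apply the A-B Menger theorem
    obtain ⟨f, g, D, hfA, hgB, hDp, hDd⟩ :=
      menger_AB G₀.edgeSet.ncard G₀ le_rfl A B k hsepAB
    have htrans : ∀ i, ∀ e ∈ (D i).edges, e ∈ G.edgeSet := by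
      intro i e he
      induction e using Sym2.ind with | _ a b => ?_
      exact (mem_edgeSet G).mpr (hG₀le ((D i).adj_of_mem_edges he))
    -- forbidden vertices
    have hU : ∀ i, u ∉ (D i).support ∧ v ∉ (D i).support := by
      intro i
      constructor
      · intro h; exact (hnotuv (hfA i) (D i) u h).1 rfl
      · intro h; exact (hnotuv (hfA i) (D i) v h).2 rfl
    refine ⟨fun i => Walk.cons ((G.mem_neighborSet u (f i)).mp (hfA i)) (((D i).transfer G (htrans i)).append
      (Walk.cons ((G.mem_neighborSet v (g i)).mp (hgB i)).symm Walk.nil)), ?_, ?_⟩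
    · intro i
      rw [Walk.cons_isPath_iff]
      constructor
      · rw [Walk.isPath_def, Walk.support_append, Walk.support_transfer]
        simp only [Walk.support_cons, Walk.support_nil, List.tail_cons]
        rw [List.nodup_append]
        refine ⟨(hDp i).support_nodup, List.nodup_singleton v, ?_⟩
        intro w hw w' hw2 hww'
        rw [List.mem_singleton] at hw2
        subst hww'
        subst hw2
        exact (hU i).2 hw
      · rw [Walk.mem_support_append_iff, Walk.support_transfer]
        rintro (h | h)
        · exact (hU i).1 h
        · simp only [Walk.support_cons, Walk.support_nil, List.mem_cons,
            List.mem_singleton, List.not_mem_nil, or_false] at h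
          rcases h with h | h
          · have hvu : G.Adj v u := by rw [h]; exact hgB i
            exact hadj hvu.symm
          · exact huv h
    · intro i j hij w hwi hwj
      rw [Walk.support_cons, List.mem_cons] at hwi hwj
      rcases hwi with rfl | hwi
      · exact Or.inl rfl
      rcases hwj with rfl | hwj
      · exact Or.inl rfl
      rw [Walk.mem_support_append_iff, Walk.support_transfer] at hwi hwj
      have hwi' : w ∈ (D i).support ∨ w = v := by
        rcases hwi with h | h
        · exact Or.inl h
        · simp only [Walk.support_cons, Walk.support_nil, List.mem_cons,
            List.mem_singleton, List.not_mem_nil, or_false] at h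
          rcases h with h | h
          · rw [h]; exact Or.inl (Walk.end_mem_support _)
          · exact Or.inr h
      have hwj' : w ∈ (D j).support ∨ w = v := by
        rcases hwj with h | h
        · exact Or.inl h
        · simp only [Walk.support_cons, Walk.support_nil, List.mem_cons,
            List.mem_singleton, List.not_mem_nil, or_false] at h
          rcases h with h | h
          · rw [h]; exact Or.inl (Walk.end_mem_support _)
          · exact Or.inr h
      rcases hwi' with hwi' | rfl
      · rcases hwj' with hwj' | rfl
        · exact absurd hwj' (fun h => hDd i j hij w hwi' h)
        · exact Or.inr rfl
      · exact Or.inr rfl
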